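/- For q ∈ {5, 11, 17, 23}, the code L(q) is spanned over GF(3) by its (0,1)-codewords of weight q+1; equivalently, the GF(3)-row span of the block-by-point incidence matrix of the Hadamard 3-design D(q) equals L(q) (the incidence matrix of D(q) has 3-rank q+1). -/

import Mathlib

open Matrix Finset

/-- The Pless matrix `S_q`, with rows and columns indexed by `GF(q) ∪ {∞}`
(`none` playing the role of `∞`), built from the quadratic character of `GF(q)`. -/
def Smat (F : Type) [Field F] [Fintype F] [DecidableEq F] :
    Matrix (Option F) (Option F) ℤ := fun i j =>
  match i, j with
  | none, none => 0
  | none, some _ => 1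
  | some _, none => quadraticChar F (-1)
  | some a, some b => quadraticChar F (a - b)

/-- The matrix `U_q`, obtained from `S_q` by replacing each entry `s_{a,∞}`
(`a ∈ GF(q)`) in the column labeled `∞` by `-1`. -/
def Umat (F : Type) [Field F] [Fintype F] [DecidableEq F] :
    Matrix (Option F) (Option F) ℤ := fun i j =>
  match i, j with
  | some _, none => -1
  | i, j => Smat F i j

/-- The row of the generator matrix `(I | U_q)` of the code `L(q)`,
reduced modulo 3, indexed by `i : Option F`. -/
def genRowL (F : Type) [Field F] [Fintype F] [DecidableEq F] (i : Option F) :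
    (Option F ⊕ Option F) → ZMod 3 := fun j =>
  match j with
  | Sum.inl k => if i = k then 1 else 0
  | Sum.inr k => ((Umat F i k : ℤ) : ZMod 3)

/-- The code `L(q)`: the ternary code of length `2q+2` spanned by the rows of
`(I | U_q)` reduced modulo 3; it is monomially equivalent to the Pless symmetry code. -/
def Lcode (F : Type) [Field F] [Fintype F] [DecidableEq F] :
    Submodule (ZMod 3) ((Option F ⊕ Option F) → ZMod 3) :=
  Submodule.span (ZMod 3) (Set.range (genRowL F))

/-- The Hadamard matrix `H = [[I − U_qᵀ, U_q + I], [I + U_qᵀ, U_q − I]]`. -/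
def Hmat (F : Type) [Field F] [Fintype F] [DecidableEq F] :
    Matrix (Option F ⊕ Option F) (Option F ⊕ Option F) ℤ :=
  Matrix.fromBlocks (1 - (Umat F)ᵀ) (Umat F + 1) (1 + (Umat F)ᵀ) (Umat F - 1)

/-- The vector `r + 2·1̄` over `GF(3)`, where `r` is the row of `H` (if `s = true`)
or of `−H` (if `s = false`) indexed by `i`, reduced modulo 3. -/
def dvec (F : Type) [Field F] [Fintype F] [DecidableEq F]
    (s : Bool) (i : Option F ⊕ Option F) : (Option F ⊕ Option F) → ZMod 3 := fun j =>
  (if s then 1 else -1) * ((Hmat F i j : ℤ) : ZMod 3) + 2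

section Aux
variable (F : Type) [Field F] [Fintype F] [DecidableEq F]

@[simp] lemma Umat_none_none : Umat F none none = 0 := rfl
@[simp] lemma Umat_none_some (b : F) : Umat F none (some b) = 1 := rfl
@[simp] lemma Umat_some_none (a : F) : Umat F (some a) none = -1 := rfl
@[simp] lemma Umat_some_some (a b : F) :
    Umat F (some a) (some b) = quadraticChar F (a - b) := rfl

lemma sum_chi_shift (hch : ringChar F ≠ 2) (c : F) (hc : c ≠ 0) :
    ∑ t : F, (quadraticChar F t : ℤ) * quadraticChar F (t + c) = -1 := by
  have key : ∀ t : F, t ≠ 0 →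
      (quadraticChar F t : ℤ) * quadraticChar F (t + c) = quadraticChar F (1 + c * t⁻¹) := by
    intro t ht
    have : t + c = t * (1 + c * t⁻¹) := by field_simp
    rw [this, _root_.map_mul, ← mul_assoc, ← pow_two, quadraticChar_sq_one ht, one_mul]
  have h0 : ∑ t : F, (quadraticChar F t : ℤ) * quadraticChar F (t + c)
      = ∑ t ∈ univ.erase (0 : F), (quadraticChar F t : ℤ) * quadraticChar F (t + c) := by
    rw [Finset.sum_erase]
    simp
  rw [h0]
  have h1 : ∑ t ∈ univ.erase (0 : F), (quadraticChar F t : ℤ) * quadraticChar F (t + c)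
      = ∑ u ∈ univ.erase (1 : F), (quadraticChar F u : ℤ) := by
    apply Finset.sum_bij' (fun t _ => 1 + c * t⁻¹) (fun u _ => c * (u - 1)⁻¹)
    · intro t ht
      simp only [mem_erase, mem_univ, and_true] at ht ⊢
      intro h'
      have : c * t⁻¹ = 0 := by linear_combination h'
      rcases mul_eq_zero.1 this with h2 | h2
      · exact hc h2
      · exact ht (by simpa using inv_eq_zero.mp h2)
    · intro u hu
      simp only [mem_erase, mem_univ, and_true] at hu ⊢
      intro h'
      have : (u - 1)⁻¹ = 0 := by
        rcases mul_eq_zero.1 h' with h2 | h2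
        · exact absurd h2 hc
        · exact h2
      have := inv_eq_zero.mp this
      exact hu (by linear_combination this)
    · intro t ht
      simp only [mem_erase, mem_univ, and_true] at ht
      field_simp
      rw [add_sub_cancel_left, div_self hc]
    · intro u hu
      simp only [mem_erase, mem_univ, and_true] at hu
      have h1 : u - 1 ≠ 0 := sub_ne_zero.mpr hu
      field_simp
      ring
    · intro t ht
      simp only [mem_erase, mem_univ, and_true] at ht
      exact key t ht
  rw [h1, Finset.sum_erase_eq_sub (Finset.mem_univ 1), quadraticChar_sum_zero hch]
  simp

lemma sum_chi_sub (hch : ringChar F ≠ 2) (b : F) : ∑ a : F, (quadraticChar F (a - b) : ℤ) = 0 := by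
  rw [← Equiv.sum_comp (Equiv.addRight b) (fun a => (quadraticChar F (a - b) : ℤ))]
  simp only [Equiv.coe_addRight, add_sub_cancel_right]
  exact quadraticChar_sum_zero hch

lemma sum_chi_sub_mul (hch : ringChar F ≠ 2) (b b' : F) (h : b ≠ b') :
    ∑ a : F, (quadraticChar F (a - b) : ℤ) * quadraticChar F (a - b') = -1 := by
  rw [← Equiv.sum_comp (Equiv.addRight b)
    (fun a => (quadraticChar F (a - b) : ℤ) * quadraticChar F (a - b'))]
  simp only [Equiv.coe_addRight, add_sub_cancel_right]
  have : ∀ t : F, t + b - b' = t + (b - b') := by intro t; ring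
  simp only [this]
  exact sum_chi_shift F hch (b - b') (sub_ne_zero.mpr h)

lemma sum_chi_sq (b : F) :
    ∑ a : F, (quadraticChar F (a - b) : ℤ) * quadraticChar F (a - b)
      = (Fintype.card F : ℤ) - 1 := by
  have : ∀ a : F, (quadraticChar F (a - b) : ℤ) * quadraticChar F (a - b)
      = 1 - (if a = b then 1 else 0) := by
    intro a
    by_cases hab : a = b
    · simp [hab]
    · have : a - b ≠ 0 := sub_ne_zero.mpr hab
      rw [← pow_two, quadraticChar_sq_one this]
      simp [hab]
  rw [Finset.sum_congr rfl (fun a _ => this a)]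
  rw [Finset.sum_sub_distrib, Finset.sum_const]
  simp [Finset.card_univ]

lemma UtU (hch : ringChar F ≠ 2) (a k : Option F) :
    ∑ i : Option F, Umat F i a * Umat F i k
      = if a = k then (Fintype.card F : ℤ) else 0 := by
  rw [Fintype.sum_option]
  match a, k with
  | none, none => simp [Finset.card_univ]
  | none, some b =>
      simp only [Umat_none_none, Umat_none_some, Umat_some_none, Umat_some_some]
      have : ∑ a : F, (-1 : ℤ) * quadraticChar F (a - b) = -∑ a : F, (quadraticChar F (a - b) : ℤ) := by
        rw [← Finset.sum_neg_distrib]; congr 1; funext a; ring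
      rw [this, sum_chi_sub F hch b]
      simp
  | some b, none =>
      simp only [Umat_none_none, Umat_none_some, Umat_some_none, Umat_some_some]
      have : ∑ a : F, (quadraticChar F (a - b) : ℤ) * (-1) = -∑ a : F, (quadraticChar F (a - b) : ℤ) := by
        rw [← Finset.sum_neg_distrib]; congr 1; funext a; ring
      rw [this, sum_chi_sub F hch b]
      simp
  | some b, some b' =>
      simp only [Umat_none_some, Umat_some_some, one_mul]
      by_cases hbb : b = b'
      · subst hbb
        rw [sum_chi_sq F b]
        simp
      · rw [sum_chi_sub_mul F hch b b' hbb]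
        simp [hbb]

lemma colsum_none : ∑ i : Option F, Umat F i none = -(Fintype.card F : ℤ) := by
  rw [Fintype.sum_option]; simp [Finset.card_univ]

lemma colsum_some (hch : ringChar F ≠ 2) (b : F) : ∑ i : Option F, Umat F i (some b) = 1 := by
  rw [Fintype.sum_option]
  simp only [Umat_none_some, Umat_some_some]
  rw [sum_chi_sub F hch b]
  norm_num

lemma rowsum_none : ∑ j : Option F, Umat F none j = (Fintype.card F : ℤ) := by
  rw [Fintype.sum_option]; simp [Finset.card_univ]

lemma rowsum_some (hch : ringChar F ≠ 2) (a : F) : ∑ j : Option F, Umat F (some a) j = -1 := by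
  rw [Fintype.sum_option]
  have : ∀ b : F, Umat F (some a) (some b) = quadraticChar F (-(b - a)) := by
    intro b; rw [Umat_some_some]; congr 1; ring
  simp only [Umat_some_none, this]
  have : ∑ b : F, (quadraticChar F (-(b - a)) : ℤ)
      = ∑ b : F, (quadraticChar F (-1) : ℤ) * quadraticChar F (b - a) := by
    congr 1; funext b
    rw [← _root_.map_mul]; congr 1; ring
  rw [this, ← Finset.mul_sum, sum_chi_sub F hch a]
  ring

-- matrix entry lemmas
lemma Udiag (i : Option F) : Umat F i i = 0 := by
  match i with
  | none => rfl
  | some a => simp [sub_self]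

lemma Uent {i j : Option F} (h : i ≠ j) : Umat F i j = 1 ∨ Umat F i j = -1 := by
  match i, j with
  | none, none => exact absurd rfl h
  | none, some b => exact Or.inl rfl
  | some a, none => exact Or.inr rfl
  | some a, some b =>
      have hab : a ≠ b := fun hh => h (by rw [hh])
      have : a - b ≠ 0 := sub_ne_zero.mpr hab
      simpa using quadraticChar_dichotomy this

@[simp] lemma Hmat_inl_inl (a k : Option F) :
    Hmat F (Sum.inl a) (Sum.inl k) = (if a = k then 1 else 0) - Umat F k a := by
  simp [Hmat, Matrix.one_apply]

@[simp] lemma Hmat_inl_inr (a k : Option F) :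
    Hmat F (Sum.inl a) (Sum.inr k) = Umat F a k + (if a = k then 1 else 0) := by
  simp [Hmat, Matrix.one_apply]

@[simp] lemma Hmat_inr_inl (a k : Option F) :
    Hmat F (Sum.inr a) (Sum.inl k) = (if a = k then 1 else 0) + Umat F k a := by
  simp [Hmat, Matrix.one_apply]

@[simp] lemma Hmat_inr_inr (a k : Option F) :
    Hmat F (Sum.inr a) (Sum.inr k) = Umat F a k - (if a = k then 1 else 0) := by
  simp [Hmat, Matrix.one_apply]

lemma Hent (i j : Option F ⊕ Option F) : Hmat F i j = 1 ∨ Hmat F i j = -1 := by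
  rcases i with a | a <;> rcases j with k | k <;> by_cases h : a = k
  · subst h; rw [Hmat_inl_inl, Udiag]; norm_num
  · rw [Hmat_inl_inl, if_neg h]
    rcases Uent F (fun hh : k = a => h hh.symm) with h1 | h1 <;> rw [h1] <;> norm_num
  · subst h; rw [Hmat_inl_inr, Udiag]; norm_num
  · rw [Hmat_inl_inr, if_neg h]
    rcases Uent F h with h1 | h1 <;> rw [h1] <;> norm_num
  · subst h; rw [Hmat_inr_inl, Udiag]; norm_num
  · rw [Hmat_inr_inl, if_neg h]
    rcases Uent F (fun hh : k = a => h hh.symm) with h1 | h1 <;> rw [h1] <;> norm_num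
  · subst h; rw [Hmat_inr_inr, Udiag]; norm_num
  · rw [Hmat_inr_inr, if_neg h]
    rcases Uent F h with h1 | h1 <;> rw [h1] <;> norm_num

lemma Hrowsum (hch : ringChar F ≠ 2) (i : Option F ⊕ Option F) (hi : i ≠ Sum.inl none) :
    ∑ j : Option F ⊕ Option F, Hmat F i j = 0 := by
  rw [Fintype.sum_sum_type]
  match i with
  | Sum.inl none => exact absurd rfl hi
  | Sum.inl (some a) =>
      simp only [Hmat_inl_inl, Hmat_inl_inr]
      rw [Finset.sum_sub_distrib, Finset.sum_add_distrib, colsum_some F hch a,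
        rowsum_some F hch a]
      simp
  | Sum.inr none =>
      simp only [Hmat_inr_inl, Hmat_inr_inr]
      rw [Finset.sum_add_distrib, Finset.sum_sub_distrib, colsum_none, rowsum_none]
      simp only [Finset.sum_ite_eq, Finset.mem_univ, if_true]
      ring
  | Sum.inr (some a) =>
      simp only [Hmat_inr_inl, Hmat_inr_inr]
      rw [Finset.sum_add_distrib, Finset.sum_sub_distrib, colsum_some F hch a,
        rowsum_some F hch a]
      simp
end Aux

section Span
variable (F : Type) [Field F] [Fintype F] [DecidableEq F]

def dualRow (a : Option F) : (Option F ⊕ Option F) → ZMod 3 := fun j =>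
  match j with
  | Sum.inl k => ((-Umat F k a : ℤ) : ZMod 3)
  | Sum.inr k => if k = a then 1 else 0

def onesv : (Option F ⊕ Option F) → ZMod 3 := fun _ => 1

lemma ones_mem (hch : ringChar F ≠ 2) (h3 : ((Fintype.card F : ℤ) : ZMod 3) = 2) :
    onesv F ∈ Lcode F := by
  have he : onesv F = ∑ i : Option F, genRowL F i := by
    funext j
    rw [Finset.sum_apply]
    match j with
    | Sum.inl k =>
        show (1 : ZMod 3) = ∑ i : Option F, (if i = k then 1 else 0)
        rw [Finset.sum_ite_eq' univ k (fun _ => (1 : ZMod 3))]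
        simp
    | Sum.inr k =>
        show (1 : ZMod 3) = ∑ i : Option F, ((Umat F i k : ℤ) : ZMod 3)
        rw [← Int.cast_sum]
        match k with
        | none => rw [colsum_none, Int.cast_neg, h3]; decide
        | some b => rw [colsum_some F hch b]; simp
  rw [he]
  exact Submodule.sum_mem _ fun i _ => Submodule.subset_span ⟨i, rfl⟩

lemma dual_mem (hch : ringChar F ≠ 2) (h3 : ((Fintype.card F : ℤ) : ZMod 3) = 2)
    (a : Option F) : dualRow F a ∈ Lcode F := by
  have he : dualRow F a = ∑ i : Option F, (((-Umat F i a : ℤ) : ZMod 3)) • genRowL F i := by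
    funext j
    rw [Finset.sum_apply]
    simp only [Pi.smul_apply, smul_eq_mul]
    match j with
    | Sum.inl k =>
        show ((-Umat F k a : ℤ) : ZMod 3)
            = ∑ i : Option F, ((-Umat F i a : ℤ) : ZMod 3) * (if i = k then 1 else 0)
        simp only [mul_ite, mul_one, mul_zero]
        rw [Finset.sum_ite_eq' univ k (fun i => ((-Umat F i a : ℤ) : ZMod 3))]
        simp
    | Sum.inr k =>
        show (if k = a then (1 : ZMod 3) else 0)
            = ∑ i : Option F, ((-Umat F i a : ℤ) : ZMod 3) * ((Umat F i k : ℤ) : ZMod 3)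
        have hterm : ∀ i : Option F, ((-Umat F i a : ℤ) : ZMod 3) * ((Umat F i k : ℤ) : ZMod 3)
            = (((-(Umat F i a * Umat F i k)) : ℤ) : ZMod 3) := by
          intro i; push_cast; ring
        rw [Finset.sum_congr rfl (fun i _ => hterm i), ← Int.cast_sum,
          Finset.sum_neg_distrib, UtU F hch a k]
        by_cases hak : a = k
        · subst hak
          rw [if_pos rfl, if_pos rfl, Int.cast_neg, h3]
          decide
        · rw [if_neg hak, if_neg (fun hh : k = a => hak hh.symm)]
          simp
  rw [he]
  exact Submodule.sum_mem _ fun i _ =>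
    Submodule.smul_mem _ _ (Submodule.subset_span ⟨i, rfl⟩)

lemma Hcast_inl (a : Option F) (j : Option F ⊕ Option F) :
    ((Hmat F (Sum.inl a) j : ℤ) : ZMod 3) = (genRowL F a + dualRow F a) j := by
  match j with
  | Sum.inl k =>
      rw [Hmat_inl_inl]
      show _ = (if a = k then (1:ZMod 3) else 0) + ((-Umat F k a : ℤ) : ZMod 3)
      push_cast
      by_cases h : a = k
      · simp [h, sub_eq_add_neg]
      · simp [h, sub_eq_add_neg]
  | Sum.inr k =>
      rw [Hmat_inl_inr]
      show _ = ((Umat F a k : ℤ) : ZMod 3) + (if k = a then (1:ZMod 3) else 0)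
      push_cast
      by_cases h : a = k
      · subst h; simp
      · rw [if_neg h, if_neg (fun hh : k = a => h hh.symm)]

lemma Hcast_inr (a : Option F) (j : Option F ⊕ Option F) :
    ((Hmat F (Sum.inr a) j : ℤ) : ZMod 3) = (genRowL F a - dualRow F a) j := by
  match j with
  | Sum.inl k =>
      rw [Hmat_inr_inl]
      show _ = (if a = k then (1:ZMod 3) else 0) - ((-Umat F k a : ℤ) : ZMod 3)
      push_cast
      by_cases h : a = k
      · simp [h]
      · simp [h, sub_eq_add_neg]
  | Sum.inr k =>
      rw [Hmat_inr_inr]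
      show _ = ((Umat F a k : ℤ) : ZMod 3) - (if k = a then (1:ZMod 3) else 0)
      push_cast
      by_cases h : a = k
      · subst h; simp
      · rw [if_neg h, if_neg (fun hh : k = a => h hh.symm)]

lemma dvec_inl (s : Bool) (a : Option F) :
    dvec F s (Sum.inl a)
      = (if s then (1 : ZMod 3) else -1) • (genRowL F a + dualRow F a) + (2 : ZMod 3) • onesv F := by
  funext j
  simp only [dvec, Pi.add_apply, Pi.smul_apply, smul_eq_mul, onesv]
  rw [Hcast_inl]
  cases s <;> simp

lemma dvec_inr (s : Bool) (a : Option F) :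
    dvec F s (Sum.inr a)
      = (if s then (1 : ZMod 3) else -1) • (genRowL F a - dualRow F a) + (2 : ZMod 3) • onesv F := by
  funext j
  simp only [dvec, Pi.add_apply, Pi.smul_apply, smul_eq_mul, onesv]
  rw [Hcast_inr]
  cases s <;> simp

lemma gd_none : genRowL F none + dualRow F none = onesv F := by
  funext j
  match j with
  | Sum.inl k =>
      show (if (none : Option F) = k then (1:ZMod 3) else 0) + ((-Umat F k none : ℤ) : ZMod 3)
          = 1
      match k with
      | none => simp
      | some b => simp
  | Sum.inr k =>
      show ((Umat F none k : ℤ) : ZMod 3) + (if k = none then (1:ZMod 3) else 0) = 1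
      match k with
      | none => simp
      | some b => simp

lemma dvec_mem (hch : ringChar F ≠ 2) (h3 : ((Fintype.card F : ℤ) : ZMod 3) = 2)
    (s : Bool) (i : Option F ⊕ Option F) : dvec F s i ∈ Lcode F := by
  have hones := ones_mem F hch h3
  match i with
  | Sum.inl a =>
      rw [dvec_inl]
      exact Submodule.add_mem _
        (Submodule.smul_mem _ _ (Submodule.add_mem _
          (Submodule.subset_span ⟨a, rfl⟩) (dual_mem F hch h3 a)))
        (Submodule.smul_mem _ _ hones)
  | Sum.inr a =>
      rw [dvec_inr]
      exact Submodule.add_mem _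
        (Submodule.smul_mem _ _ (Submodule.sub_mem _
          (Submodule.subset_span ⟨a, rfl⟩) (dual_mem F hch h3 a)))
        (Submodule.smul_mem _ _ hones)
end Span

section Count
variable (F : Type) [Field F] [Fintype F] [DecidableEq F]

lemma Hcard (hch : ringChar F ≠ 2) (i : Option F ⊕ Option F) (hi : i ≠ Sum.inl none) :
    ((univ : Finset (Option F ⊕ Option F)).filter fun j => Hmat F i j = -1).card
        = Fintype.card F + 1 ∧
    ((univ : Finset (Option F ⊕ Option F)).filter fun j => Hmat F i j = 1).card
        = Fintype.card F + 1 := by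
  classical
  have hPQ : (univ.filter fun j => ¬ Hmat F i j = -1)
      = (univ.filter fun j => Hmat F i j = 1) := by
    apply Finset.filter_congr
    intro j _
    rcases Hent F i j with h | h <;> simp [h]
  have hsum := Hrowsum F hch i hi
  rw [← Finset.sum_filter_add_sum_filter_not univ (fun j => Hmat F i j = -1)] at hsum
  have h1 : ∑ j ∈ univ.filter (fun j => Hmat F i j = -1), Hmat F i j
      = -(((univ.filter fun j => Hmat F i j = -1).card : ℤ)) := by
    rw [Finset.sum_congr rfl (fun j hj => (Finset.mem_filter.mp hj).2), Finset.sum_const]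
    simp
  have h2 : ∑ j ∈ univ.filter (fun j => ¬ Hmat F i j = -1), Hmat F i j
      = (((univ.filter fun j => ¬ Hmat F i j = -1).card : ℤ)) := by
    have hone : ∀ j ∈ univ.filter (fun j => ¬ Hmat F i j = -1), Hmat F i j = 1 := by
      intro j hj
      have hj' := (Finset.mem_filter.mp hj).2
      rcases Hent F i j with h | h
      · exact h
      · exact absurd h hj'
    rw [Finset.sum_congr rfl hone, Finset.sum_const]
    simp
  have hfil : (univ.filter fun j => Hmat F i j = -1).card
      + (univ.filter fun j => ¬ Hmat F i j = -1).card = 2 * (Fintype.card F + 1) := by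
    rw [Finset.card_filter_add_card_filter_not, Finset.card_univ]
    simp [Fintype.card_sum]
    ring
  rw [h1, h2] at hsum
  rw [← hPQ]
  omega

lemma dvec01' (s : Bool) (i j : Option F ⊕ Option F) :
    dvec F s i j = 0 ∨ dvec F s i j = 1 := by
  rcases Hent F i j with h | h <;> cases s <;> simp [dvec, h] <;> decide

lemma dvec_card (hch : ringChar F ≠ 2) (i : Option F ⊕ Option F) (hi : i ≠ Sum.inl none)
    (s : Bool) :
    ((univ : Finset (Option F ⊕ Option F)).filter fun j => dvec F s i j ≠ 0).card
      = Fintype.card F + 1 := by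
  obtain ⟨hneg, hpos⟩ := Hcard F hch i hi
  cases s
  · have he : ((univ : Finset (Option F ⊕ Option F)).filter fun j => dvec F false i j ≠ 0)
        = univ.filter fun j => Hmat F i j = 1 := by
      apply Finset.filter_congr
      intro j _
      rcases Hent F i j with h | h <;> simp [dvec, h] <;> decide
    rw [he, hpos]
  · have he : ((univ : Finset (Option F ⊕ Option F)).filter fun j => dvec F true i j ≠ 0)
        = univ.filter fun j => Hmat F i j = -1 := by
      apply Finset.filter_congr
      intro j _
      rcases Hent F i j with h | h <;> simp [dvec, h] <;> decide
    rw [he, hneg]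

lemma span_dvec (hch : ringChar F ≠ 2) (h3 : ((Fintype.card F : ℤ) : ZMod 3) = 2) :
    Submodule.span (ZMod 3) {v : (Option F ⊕ Option F) → ZMod 3 |
      ∃ (s : Bool) (i : Option F ⊕ Option F), i ≠ Sum.inl none ∧ v = dvec F s i}
      = Lcode F := by
  set D : Set ((Option F ⊕ Option F) → ZMod 3) :=
    {v | ∃ (s : Bool) (i : Option F ⊕ Option F), i ≠ Sum.inl none ∧ v = dvec F s i} with hD
  apply le_antisymm
  · rw [Submodule.span_le]
    rintro v ⟨s, i, hi, rfl⟩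
    exact dvec_mem F hch h3 s i
  · have hones : onesv F ∈ Submodule.span (ZMod 3) D := by
      have he : onesv F = dvec F true (Sum.inr (none : Option F))
          + dvec F false (Sum.inr (none : Option F)) := by
        funext j
        simp only [dvec, Pi.add_apply, onesv, Bool.cond_true]
        have h' : ∀ x : ZMod 3, (1 : ZMod 3)
            = (if (true : Bool) then (1 : ZMod 3) else -1) * x + 2
              + ((if (false : Bool) then (1 : ZMod 3) else -1) * x + 2) := by decide
        exact h' _
      rw [he]
      exact add_mem (Submodule.subset_span ⟨true, _, by simp, rfl⟩)
        (Submodule.subset_span ⟨false, _, by simp, rfl⟩)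
    have hsub : ∀ b : Option F, genRowL F b - dualRow F b ∈ Submodule.span (ZMod 3) D := by
      intro b
      have he : genRowL F b - dualRow F b
          = dvec F true (Sum.inr b) - (2 : ZMod 3) • onesv F := by
        rw [dvec_inr]; simp
      rw [he]
      exact sub_mem (Submodule.subset_span ⟨true, _, by simp, rfl⟩)
        (Submodule.smul_mem _ _ hones)
    have hadd : ∀ b : Option F, genRowL F b + dualRow F b ∈ Submodule.span (ZMod 3) D := by
      intro b
      match b with
      | none => rw [gd_none]; exact hones
      | some x =>
          have he : genRowL F (some x) + dualRow F (some x)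
              = dvec F true (Sum.inl (some x)) - (2 : ZMod 3) • onesv F := by
            rw [dvec_inl]; simp
          rw [he]
          exact sub_mem (Submodule.subset_span ⟨true, Sum.inl (some x), by simp, rfl⟩)
            (Submodule.smul_mem _ _ hones)
    have hgen : ∀ a : Option F, genRowL F a ∈ Submodule.span (ZMod 3) D := by
      intro a
      have he : genRowL F a = (2 : ZMod 3)
          • ((genRowL F a + dualRow F a) + (genRowL F a - dualRow F a)) := by
        funext j
        simp only [Pi.smul_apply, Pi.add_apply, Pi.sub_apply, smul_eq_mul]
        have h' : ∀ x y : ZMod 3, x = 2 * ((x + y) + (x - y)) := by decide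
        exact h' _ _
      rw [he]
      exact Submodule.smul_mem _ _ (add_mem (hadd a) (hsub a))
    have : Lcode F = Submodule.span (ZMod 3) (Set.range (genRowL F)) := rfl
    rw [this, Submodule.span_le]
    rintro _ ⟨a, rfl⟩
    exact hgen a
end Count


/-- For `q ∈ {5, 11, 17, 23}`, the code `L(q)` is spanned over `GF(3)` by its
`(0,1)`-codewords of weight `q+1`; equivalently, the `GF(3)`-row span of the
block-by-point incidence matrix of the Hadamard 3-design `D(q)` (whose rows are
the vectors `r + 2·1̄`) equals `L(q)`. -/
theorem stmt_9 (q : ℕ) (hq : q = 5 ∨ q = 11 ∨ q = 17 ∨ q = 23)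
    (F : Type) [Field F] [Fintype F] [DecidableEq F] (hF : Fintype.card F = q) :
    Submodule.span (ZMod 3) {v : (Option F ⊕ Option F) → ZMod 3 | v ∈ Lcode F ∧
      (∀ j, v j = 0 ∨ v j = 1) ∧
      (Finset.univ.filter (fun j => v j ≠ 0)).card = q + 1} = Lcode F ∧
    Submodule.span (ZMod 3) {v : (Option F ⊕ Option F) → ZMod 3 |
      ∃ (s : Bool) (i : Option F ⊕ Option F), i ≠ Sum.inl none ∧ v = dvec F s i} =
      Lcode F := by
  have hq2 : Fintype.card F % 2 = 1 := by rcases hq with rfl | rfl | rfl | rfl <;> omega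
  have hch : ringChar F ≠ 2 := fun h => by
    have h2 := FiniteField.even_card_of_char_two h
    omega
  have h3 : ((Fintype.card F : ℤ) : ZMod 3) = 2 := by
    rw [hF]; rcases hq with rfl | rfl | rfl | rfl <;> decide
  have h2 := span_dvec F hch h3
  refine ⟨?_, h2⟩
  apply le_antisymm
  · rw [Submodule.span_le]
    rintro v ⟨hv, -, -⟩
    exact hv
  · have hsubset : {v : (Option F ⊕ Option F) → ZMod 3 |
        ∃ (s : Bool) (i : Option F ⊕ Option F), i ≠ Sum.inl none ∧ v = dvec F s i}
        ⊆ {v : (Option F ⊕ Option F) → ZMod 3 | v ∈ Lcode F ∧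
          (∀ j, v j = 0 ∨ v j = 1) ∧
          (Finset.univ.filter (fun j => v j ≠ 0)).card = q + 1} := by
      rintro v ⟨s, i, hi, rfl⟩
      exact ⟨dvec_mem F hch h3 s i, dvec01' F s i,
        by rw [dvec_card F hch i hi s, hF]⟩
    calc Lcode F = Submodule.span (ZMod 3) {v : (Option F ⊕ Option F) → ZMod 3 |
          ∃ (s : Bool) (i : Option F ⊕ Option F), i ≠ Sum.inl none ∧ v = dvec F s i} := h2.symm
      _ ≤ _ := Submodule.span_mono hsubset
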